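/- Let x_1, ..., x_n be positive real numbers such that their sum equals n and the sum of (x_i - 1)^2 is strictly greater than 1. Then the product of the x_i is at most exp(-1/6). -/

import Mathlib

lemma log_le_cbrt (x : ℝ) (hx : 0 < x) :
    Real.log x ≤ 3 * (x ^ ((1:ℝ)/3) - 1) := by
  set u := x ^ ((1:ℝ)/3) with hu
  have hupos : 0 < u := Real.rpow_pos_of_pos hx _
  have hlog : Real.log u = (1/3) * Real.log x := Real.log_rpow hx _
  have := Real.log_le_sub_one_of_pos hupos
  linarith

lemma cube_rpow (x : ℝ) (hx : 0 < x) : (x ^ ((1:ℝ)/3)) ^ 3 = x := by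
  rw [← Real.rpow_natCast (x ^ ((1:ℝ)/3)) 3, ← Real.rpow_mul hx.le]
  norm_num

lemma log_le_small (x : ℝ) (hx : 0 < x) (hx3 : x ≤ 3) :
    Real.log x ≤ (x - 1) - (x - 1) ^ 2 / 6 := by
  have h1 := log_le_cbrt x hx
  set u := x ^ ((1:ℝ)/3)
  have hupos : 0 < u := Real.rpow_pos_of_pos hx _
  have hcube : u ^ 3 = x := cube_rpow x hx
  have hle3 : u ^ 3 ≤ 3 := hcube ▸ hx3
  have hub : u ≤ 29/20 := by nlinarith [sq_nonneg (u - 29/20), sq_nonneg (u + 29/20), hupos.le]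
  have h4 : u ^ 4 ≤ 3 * u := by nlinarith [hupos.le]
  have h6 : 0 ≤ 6 * (u + 2) - (u^2 + u + 1) ^ 2 := by nlinarith [hupos.le, sq_nonneg u]
  have key : 3 * (u - 1) ≤ (u ^ 3 - 1) - (u ^ 3 - 1) ^ 2 / 6 := by
    nlinarith [mul_nonneg (sq_nonneg (u - 1)) h6]
  rw [hcube] at key
  linarith

lemma log_le_big (x : ℝ) (hx3 : 3 ≤ x) :
    Real.log x ≤ (x - 1) - 1/3 := by
  have hx : 0 < x := by linarith
  have h1 := log_le_cbrt x hx
  set u := x ^ ((1:ℝ)/3)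
  have hupos : 0 < u := Real.rpow_pos_of_pos hx _
  have hcube : u ^ 3 = x := cube_rpow x hx
  have hge : 3 ≤ u ^ 3 := hcube ▸ hx3
  have hlb : 7/5 ≤ u := by nlinarith [sq_nonneg (u - 7/5), sq_nonneg (u + 7/5), hupos.le]
  have key : 3 * (u - 1) ≤ (u ^ 3 - 1) - 1/3 := by
    nlinarith [mul_nonneg (sub_nonneg.mpr hlb) (sq_nonneg (u - 7/5)), sq_nonneg (u - 7/5)]
  rw [hcube] at key
  linarith

theorem product_upper_bound_large_alpha (n : ℕ) (x : Fin n → ℝ)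
    (hx : ∀ i, 0 < x i) (hsum : ∑ i, x i = n)
    (h : 1 < ∑ i, (x i - 1) ^ 2) :
    ∏ i, x i ≤ Real.exp (-1 / 6) := by
  have hprodpos : 0 < ∏ i, x i := Finset.prod_pos (fun i _ => hx i)
  have hlogsum : Real.log (∏ i, x i) = ∑ i, Real.log (x i) :=
    Real.log_prod (fun i _ => (hx i).ne')
  suffices hs : ∑ i, Real.log (x i) ≤ -1/6 by
    calc ∏ i, x i = Real.exp (Real.log (∏ i, x i)) := (Real.exp_log hprodpos).symm
    _ ≤ Real.exp (-1/6) := Real.exp_le_exp.mpr (by rw [hlogsum]; linarith)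
  have e1 : ∑ i, (x i - 1) = (∑ i, x i) - n := by
    rw [Finset.sum_sub_distrib, Finset.sum_const, Finset.card_univ, Fintype.card_fin]
    simp
  by_cases hc : ∀ i, x i ≤ 3
  · have hbound : ∑ i, Real.log (x i) ≤ ∑ i, ((x i - 1) - (x i - 1) ^ 2 / 6) :=
      Finset.sum_le_sum (fun i _ => log_le_small (x i) (hx i) (hc i))
    have e2 : ∑ i, ((x i - 1) - (x i - 1) ^ 2 / 6)
        = (∑ i, (x i - 1)) - (∑ i, (x i - 1) ^ 2) / 6 := by
      rw [Finset.sum_sub_distrib, Finset.sum_div]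
    rw [e2, e1, hsum] at hbound
    linarith
  · push_neg at hc
    obtain ⟨j, hj⟩ := hc
    have hn1 : 1 ≤ n := Fin.pos j
    have hsplit : ∑ i, Real.log (x i)
        = Real.log (x j) + ∑ i ∈ Finset.univ.erase j, Real.log (x i) :=
      (Finset.add_sum_erase _ _ (Finset.mem_univ j)).symm
    have hxsplit : (x j - 1) + ∑ i ∈ Finset.univ.erase j, (x i - 1) = ∑ i, (x i - 1) := by
      exact Finset.add_sum_erase _ (fun i => x i - 1) (Finset.mem_univ j)
    have hbound2 : ∑ i ∈ Finset.univ.erase j, Real.log (x i)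
        ≤ ∑ i ∈ Finset.univ.erase j, (x i - 1) :=
      Finset.sum_le_sum (fun i _ => Real.log_le_sub_one_of_pos (hx i))
    have hlogj := log_le_big (x j) hj.le
    rw [e1, hsum] at hxsplit
    rw [hsplit]
    linarith
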